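/- Let a group G act on a tree T such that the stabilizer of every edge of T is two-ended. Let A and B be commensurable two-ended subgroups of G fixing vertices a and b respectively. Then for every edge e lying on the path [a,b], the stabilizer G_e is commensurable with A (and hence also with B). In other words, commensurability on two-ended subgroups satisfies the third axiom of admissibility. -/

import Mathlib

/-- The stabilizer of the edge (u,v): elements fixing both endpoints. -/
noncomputable def edgeStab (G : Type*) [Group G] {V : Type*} [MulAction G V] (u v : V) :
    Subgroup G :=
  MulAction.stabilizer G u ⊓ MulAction.stabilizer G v

/-- A group is two-ended if it is infinite and has an infinite cyclic subgroup of
finite index. -/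
def IsTwoEndedGroup (H : Type*) [Group H] : Prop :=
  Infinite H ∧ ∃ Z : Subgroup H, IsCyclic ↥Z ∧ Infinite ↥Z ∧ Z.FiniteIndex

private lemma list_map_fix {α : Type*} (f : α → α) :
    ∀ (l : List α), l.map f = l → ∀ x ∈ l, f x = x := by
  intro l
  induction l with
  | nil => intro _ x hx; simp at hx
  | cons y t ih =>
      intro h x hx
      simp only [List.map_cons, List.cons.injEq] at h
      rcases List.mem_cons.mp hx with hx | hx
      · subst hx; exact h.1
      · exact ih h.2 x hx

/-- An element fixing the endpoints of a path in a tree fixes every vertex on it. -/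
private lemma fixes_path {G V : Type*} [Group G] [MulAction G V] {T : SimpleGraph V}
    (hT : T.IsTree)
    (hact : ∀ (g : G) (u v : V), T.Adj u v → T.Adj (g • u) (g • v))
    {a b : V} (p : T.Walk a b) (hp : p.IsPath) (g : G) (ha : g • a = a) (hb : g • b = b) :
    ∀ x ∈ p.support, g • x = x := by
  let f : T →g T := ⟨fun x => g • x, fun h => hact g _ _ h⟩
  have hinj : Function.Injective f := MulAction.injective g
  have hq : ((p.map f).copy ha hb).IsPath := by
    rw [SimpleGraph.Walk.isPath_copy]
    exact SimpleGraph.Walk.map_isPath_of_injective hinj hp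
  obtain ⟨q, hq1, hq2⟩ := hT.existsUnique_path a b
  have h1 : p = q := hq2 p hp
  have h2 : (p.map f).copy ha hb = q := hq2 _ hq
  have hsupp : p.support.map f = p.support := by
    have h3 : ((p.map f).copy ha hb).support = p.support := by rw [h2, ← h1]
    rwa [SimpleGraph.Walk.support_copy, SimpleGraph.Walk.support_map] at h3
  exact list_map_fix f p.support hsupp

/-- A finite-index subgroup of an infinite group is infinite. -/
private lemma infinite_of_finiteIndex {H : Type*} [Group H] [Infinite H] (K : Subgroup H)
    (hK : K.FiniteIndex) : Infinite K := by
  by_contra h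
  have hfin : Finite K := not_infinite_iff_finite.mp h
  have hm := Subgroup.index_mul_card K
  have hH : Nat.card H = 0 := Nat.card_eq_zero_of_infinite
  rw [hH] at hm
  have hc : Nat.card K ≠ 0 := Nat.card_pos.ne'
  exact (mul_ne_zero hK.index_ne_zero hc) hm

/-- An infinite subgroup of ℤ has finite index. -/
private lemma int_finiteIndex (S : AddSubgroup ℤ) (hS : Infinite S) : S.FiniteIndex := by
  obtain ⟨c, hc⟩ := Int.subgroup_cyclic S
  have hSz : S = AddSubgroup.zmultiples c := by
    rw [hc, AddSubgroup.zmultiples_eq_closure]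
  rcases eq_or_ne c 0 with h0 | h0
  · exfalso
    subst h0
    rw [hSz] at hS
    have hb : AddSubgroup.zmultiples (0 : ℤ) = ⊥ := by
      ext x; simp [AddSubgroup.mem_zmultiples_iff]
    rw [hb] at hS
    exact (not_infinite_iff_finite.mpr inferInstance) hS
  · constructor
    rw [hSz, Int.index_zmultiples]
    simpa using h0

/-- An infinite subgroup of an infinite cyclic group has finite index. -/
private lemma cyclic_finiteIndex {C : Type*} [Group C] (hc : IsCyclic C) (hinfC : Infinite C)
    (S : Subgroup C) (hS : Infinite S) : S.FiniteIndex := by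
  have e : Multiplicative ℤ ≃* C := by
    have h0 : Nat.card C = 0 := Nat.card_eq_zero_of_infinite
    have e0 := zmodCyclicMulEquiv hc
    rw [h0] at e0
    exact e0
  set S' : Subgroup (Multiplicative ℤ) := S.comap e.toMonoidHom with hS'def
  have hidx : S'.index = S.index :=
    Subgroup.index_comap_of_surjective S e.surjective
  have hinf' : Infinite S' := by
    refine Infinite.of_injective (fun s : S => (⟨e.symm (s : C), ?_⟩ : S')) ?_
    · show e (e.symm (s : C)) ∈ S
      simpa using s.2
    · intro x y hxy
      apply Subtype.ext
      have h := congrArg (fun z : S' => e ((z : Multiplicative ℤ))) hxy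
      simpa using h
  have hadd : (Subgroup.toAddSubgroup S').FiniteIndex := by
    apply int_finiteIndex
    exact Infinite.of_injective
      (fun s : S' => (⟨(s : Multiplicative ℤ), s.2⟩ : Subgroup.toAddSubgroup S'))
      (by intro x y hxy
          apply Subtype.ext
          exact congrArg Subtype.val hxy)
  constructor
  have h := hadd.index_ne_zero
  rw [Subgroup.index_toAddSubgroup] at h
  rwa [hidx] at h

/-- An infinite subgroup of a two-ended group has finite index. -/
private lemma twoEnded_finiteIndex {H : Type*} [Group H] (h2 : IsTwoEndedGroup H)
    (K : Subgroup H) (hK : Infinite K) : K.FiniteIndex := by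
  obtain ⟨hinf, Z, hcyc, hZinf, hZfi⟩ := h2
  haveI := hK
  haveI := hZfi
  have hZK : Infinite (Z.subgroupOf K) :=
    infinite_of_finiteIndex _ (Subgroup.instFiniteIndex_subgroupOf Z K)
  have hKZ : Infinite (K.subgroupOf Z) := by
    refine Infinite.of_injective
      (fun s : Z.subgroupOf K => (⟨⟨((s : K) : H), s.2⟩, (s : K).2⟩ : K.subgroupOf Z)) ?_
    intro x y hxy
    apply Subtype.ext; apply Subtype.ext
    exact congrArg (fun z : K.subgroupOf Z => ((z : Z) : H)) hxy
  have hrel : (K.subgroupOf Z).FiniteIndex := cyclic_finiteIndex hcyc hZinf _ hKZ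
  have h1 : (K ⊓ Z).relIndex Z * Z.index = (K ⊓ Z).index :=
    Subgroup.relIndex_mul_index inf_le_right
  have h2 : (K ⊓ Z).relIndex Z = K.relIndex Z := Subgroup.inf_relIndex_right K Z
  have h3 : (K ⊓ Z).index ≠ 0 := by
    rw [← h1, h2]
    exact mul_ne_zero hrel.index_ne_zero hZfi.index_ne_zero
  haveI : (K ⊓ Z).FiniteIndex := ⟨h3⟩
  exact Subgroup.finiteIndex_of_le (inf_le_left : K ⊓ Z ≤ K)

/-- If `N ≤ M`, `N` is infinite, and `M` is two-ended (as a group), then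
`N.relIndex M ≠ 0`. -/
private lemma relIndex_ne_zero_of_infinite_le {G : Type*} [Group G] {N M : Subgroup G}
    (hle : N ≤ M) (hN : Infinite N) (hM : IsTwoEndedGroup M) : N.relIndex M ≠ 0 := by
  have hNM : Infinite (N.subgroupOf M) :=
    Infinite.of_injective (fun n : N => (⟨⟨(n : G), hle n.2⟩, n.2⟩ : N.subgroupOf M))
      (by intro x y hxy
          apply Subtype.ext
          exact congrArg (fun z : N.subgroupOf M => ((z : M) : G)) hxy)
  exact (twoEnded_finiteIndex hM _ hNM).index_ne_zero

/-- If a group acts (without inversions) on a tree with two-ended edge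
stabilizers, and A, B are commensurable two-ended subgroups fixing vertices a, b, then
the stabilizer of every edge on [a,b] is commensurable to A and to B (axiom 3 of
admissibility for commensurability). -/
theorem commensurability_axiom3 {G V : Type*} [Group G] [MulAction G V]
    (T : SimpleGraph V) (hT : T.IsTree)
    (hact : ∀ (g : G) (u v : V), T.Adj u v → T.Adj (g • u) (g • v))
    (hni : ∀ (g : G) (u v : V), T.Adj u v → ¬(g • u = v ∧ g • v = u))
    (hstab : ∀ u v : V, T.Adj u v → IsTwoEndedGroup ↥(edgeStab G u v))
    (A B : Subgroup G) (hA2 : IsTwoEndedGroup ↥A) (hB2 : IsTwoEndedGroup ↥B)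
    (hcomm : Subgroup.Commensurable A B)
    (a b : V) (hAfix : ∀ g ∈ A, g • a = a) (hBfix : ∀ g ∈ B, g • b = b) :
    ∀ (p : T.Walk a b), p.IsPath → ∀ u v : V, s(u, v) ∈ p.edges →
      Subgroup.Commensurable (edgeStab G u v) A ∧ Subgroup.Commensurable (edgeStab G u v) B := by
  intro p hp u v he
  have hadj : T.Adj u v := p.adj_of_mem_edges he
  have hE2 : IsTwoEndedGroup ↥(edgeStab G u v) := hstab u v hadj
  set E := edgeStab G u v with hEdef
  set N := A ⊓ B with hNdef
  -- every element of N fixes the whole path, in particular u and v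
  have hNE : N ≤ E := by
    intro g hg
    have hfix := fixes_path hT hact p hp g
      (hAfix g hg.1) (hBfix g hg.2)
    refine ⟨?_, ?_⟩
    · exact hfix u (p.fst_mem_support_of_mem_edges he)
    · exact hfix v (p.snd_mem_support_of_mem_edges he)
  have hNA : N ≤ A := inf_le_left
  -- N is infinite
  have hNrelA : N.relIndex A ≠ 0 := by
    have := hcomm.2
    rwa [← Subgroup.inf_relIndex_right, inf_comm] at this
  have hNinf : Infinite N := by
    haveI : Infinite A := hA2.1
    have : Infinite (N.subgroupOf A) := infinite_of_finiteIndex _ ⟨hNrelA⟩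
    exact Infinite.of_injective
      (fun n : N.subgroupOf A => (⟨((n : A) : G), n.2⟩ : N))
      (by intro x y hxy
          apply Subtype.ext; apply Subtype.ext
          exact congrArg (fun z : N => (z : G)) hxy)
  -- N has finite relative index in E
  have hNrelE : N.relIndex E ≠ 0 := relIndex_ne_zero_of_infinite_le hNE hNinf hE2
  have hEA : Subgroup.Commensurable E A := by
    constructor
    · intro h
      exact hNrelA (Subgroup.relIndex_eq_zero_of_le_left hNE h)
    · intro h
      exact hNrelE (Subgroup.relIndex_eq_zero_of_le_left hNA h)
  exact ⟨hEA, hEA.trans hcomm⟩
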